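/- Let B be the bipartite graph that is a single even cycle C_{2q} with q ≥ 2. Then λ(B) = q, where λ is the recession connectivity. -/

import Mathlib

/-! Scaffolding for bipartite graphs given by edge sets `B : Finset (L × R)`,
their recession graphs, and the recession connectivity `λ`. -/

variable {L R : Type*}

/-- The undirected simple graph on `L ⊕ R` determined by an edge set `S ⊆ L × R`. -/
def sgraph (S : Finset (L × R)) : SimpleGraph (L ⊕ R) where
  Adj v w := (∃ e ∈ S, v = Sum.inl e.1 ∧ w = Sum.inr e.2) ∨
             (∃ e ∈ S, w = Sum.inl e.1 ∧ v = Sum.inr e.2)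
  symm := by
    constructor
    rintro v w (⟨e, he, h1, h2⟩ | ⟨e, he, h1, h2⟩)
    · exact Or.inr ⟨e, he, h1, h2⟩
    · exact Or.inl ⟨e, he, h1, h2⟩
  loopless := by
    constructor
    rintro v (⟨e, _, h1, h2⟩ | ⟨e, _, h1, h2⟩) <;> subst h1 <;> simp_all

/-- A vertex is incident to the edge set `B` if it is an endpoint of one of its edges. -/
def incid (B : Finset (L × R)) (v : L ⊕ R) : Prop :=
  ∃ e ∈ B, v = Sum.inl e.1 ∨ v = Sum.inr e.2

/-- The arcs of the recession graph `R(S; B)`: every edge of `B` gives an arc from its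
`L`-endpoint to its `R`-endpoint, and every edge of `S` additionally gives the reverse arc. -/
def recArc (S B : Finset (L × R)) (v w : L ⊕ R) : Prop :=
  (∃ e ∈ B, v = Sum.inl e.1 ∧ w = Sum.inr e.2) ∨
  (∃ e ∈ S, w = Sum.inl e.1 ∧ v = Sum.inr e.2)

/-- The recession graph `R(S; B)` is strongly connected: every vertex of `B` reaches
every other vertex of `B` by a directed path. -/
def RecStrong (S B : Finset (L × R)) : Prop :=
  ∀ v w, incid B v → incid B w → Relation.ReflTransGen (recArc S B) v w

/-- The number of connected components of (the graph of) `S` containing at least one edge. -/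
noncomputable def numComp (S : Finset (L × R)) : ℕ :=
  Set.ncard {C : (sgraph S).ConnectedComponent |
    ∃ e ∈ S, C = (sgraph S).connectedComponentMk (Sum.inl e.1)}

/-- The recession connectivity `λ(B)`:  the maximum number of connected components of a
subgraph `S ⊆ B` for which the recession graph `R(S; B)` is strongly connected. -/
noncomputable def recConn (B : Finset (L × R)) : ℕ :=
  sSup {m | ∃ S ⊆ B, RecStrong S B ∧ numComp S = m}

/-- The graph of the edge set `B` is connected (on its own vertex set). -/
def ConnectedOn (B : Finset (L × R)) : Prop :=
  B.Nonempty ∧ ∀ v w, incid B v → incid B w → (sgraph B).Reachable v w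

/-- The even cycle `C_{2q}` as a bipartite graph with parts `Fin q` and `Fin q`:
left vertex `i` is joined to right vertices `i` and `i - 1` (indices mod `q`), i.e. the
edges are `(i, i)` and `(i + 1, i)` for `i : Fin q`. -/
def cycleEdges (q : ℕ) [NeZero q] : Finset (Fin q × Fin q) :=
  (Finset.univ.image fun i : Fin q => (i, i)) ∪
    (Finset.univ.image fun i : Fin q => (i + 1, i))

-- auxiliary lemmas
section Aux

def matchS (q : ℕ) [NeZero q] : Finset (Fin q × Fin q) :=
  Finset.univ.image fun i : Fin q => (i, i)

variable {q : ℕ} [NeZero q]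

lemma matchS_subset : matchS q ⊆ cycleEdges q := by
  intro e he
  simp only [cycleEdges, Finset.mem_union]
  exact Or.inl he

lemma mem_matchS_self (i : Fin q) : (i, i) ∈ matchS q := by
  simp [matchS]

lemma mem_cycle_diag (i : Fin q) : (i, i) ∈ cycleEdges q :=
  matchS_subset (mem_matchS_self i)

lemma mem_cycle_succ (i : Fin q) : (i + 1, i) ∈ cycleEdges q := by
  simp [cycleEdges]

lemma arc1 (i : Fin q) : recArc (matchS q) (cycleEdges q) (Sum.inl i) (Sum.inr i) :=
  Or.inl ⟨(i, i), mem_cycle_diag i, rfl, rfl⟩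

lemma arc2 (i : Fin q) : recArc (matchS q) (cycleEdges q) (Sum.inl (i + 1)) (Sum.inr i) :=
  Or.inl ⟨(i + 1, i), mem_cycle_succ i, rfl, rfl⟩

lemma arc3 (i : Fin q) : recArc (matchS q) (cycleEdges q) (Sum.inr i) (Sum.inl i) :=
  Or.inr ⟨(i, i), mem_matchS_self i, rfl, rfl⟩

open Fin.NatCast Fin.CommRing in
lemma reach_all (v w : Fin q ⊕ Fin q) :
    Relation.ReflTransGen (recArc (matchS q) (cycleEdges q)) v w := by
  set r := Relation.ReflTransGen (recArc (matchS q) (cycleEdges q)) with hr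
  have down : ∀ (i : Fin q) (k : ℕ), r (Sum.inl i) (Sum.inl (i - (k : Fin q))) := by
    intro i k
    induction k with
    | zero => simpa using Relation.ReflTransGen.refl
    | succ k ih =>
      have h1 : r (Sum.inl (i - (k : Fin q))) (Sum.inr (i - (k : Fin q) - 1)) := by
        have := arc2 (i - (k : Fin q) - 1)
        rw [sub_add_cancel] at this
        exact Relation.ReflTransGen.single this
      have h2 : r (Sum.inr (i - (k : Fin q) - 1)) (Sum.inl (i - (k : Fin q) - 1)) :=
        Relation.ReflTransGen.single (arc3 _)
      have : r (Sum.inl i) (Sum.inl (i - (k : Fin q) - 1)) := (ih.trans h1).trans h2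
      have heq : i - ((k + 1 : ℕ) : Fin q) = i - (k : Fin q) - 1 := by
        push_cast
        ring
      rw [heq]
      exact this
  have hLL : ∀ i j : Fin q, r (Sum.inl i) (Sum.inl j) := by
    intro i j
    have := down i ((i - j).val)
    rwa [Fin.cast_val_eq_self, sub_sub_cancel] at this
  have toInl : ∀ (v : Fin q ⊕ Fin q), ∃ i, r v (Sum.inl i) ∧ r (Sum.inl i) v := by
    rintro (i | i)
    · exact ⟨i, Relation.ReflTransGen.refl, Relation.ReflTransGen.refl⟩
    · exact ⟨i, Relation.ReflTransGen.single (arc3 i), Relation.ReflTransGen.single (arc1 i)⟩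
  obtain ⟨i, hvi, _⟩ := toInl v
  obtain ⟨j, _, hjw⟩ := toInl w
  exact (hvi.trans (hLL i j)).trans hjw

lemma comp_index {v w : Fin q ⊕ Fin q} (h : (sgraph (matchS q)).Reachable v w) :
    Sum.elim id id v = Sum.elim id id w := by
  rw [SimpleGraph.reachable_iff_reflTransGen] at h
  induction h with
  | refl => rfl
  | tail _ hadj ih =>
    rw [ih]
    rcases hadj with ⟨e, he, h1, h2⟩ | ⟨e, he, h1, h2⟩ <;>
    · simp only [matchS, Finset.mem_image, Finset.mem_univ, true_and] at he
      obtain ⟨a, rfl⟩ := he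
      subst h1; subst h2; simp

lemma numComp_le (S : Finset (Fin q × Fin q)) : numComp S ≤ q := by
  have hsub : {C : (sgraph S).ConnectedComponent |
      ∃ e ∈ S, C = (sgraph S).connectedComponentMk (Sum.inl e.1)} ⊆
      Set.range (fun i : Fin q => (sgraph S).connectedComponentMk (Sum.inl i)) := by
    rintro C ⟨e, _, rfl⟩
    exact ⟨e.1, rfl⟩
  calc numComp S ≤ (Set.range (fun i : Fin q =>
        (sgraph S).connectedComponentMk (Sum.inl i))).ncard :=
        Set.ncard_le_ncard hsub (Set.finite_range _)
    _ ≤ (Set.univ : Set (Fin q)).ncard := by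
        rw [← Set.image_univ]
        exact Set.ncard_image_le Set.finite_univ
    _ = q := by simp [Set.ncard_univ]

lemma numComp_matchS : numComp (matchS q) = q := by
  have hset : {C : (sgraph (matchS q)).ConnectedComponent |
      ∃ e ∈ matchS q, C = (sgraph (matchS q)).connectedComponentMk (Sum.inl e.1)} =
      Set.range (fun i : Fin q => (sgraph (matchS q)).connectedComponentMk (Sum.inl i)) := by
    ext C
    constructor
    · rintro ⟨e, _, rfl⟩; exact ⟨e.1, rfl⟩
    · rintro ⟨i, rfl⟩; exact ⟨(i, i), mem_matchS_self i, rfl⟩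
  have hinj : Function.Injective
      (fun i : Fin q => (sgraph (matchS q)).connectedComponentMk (Sum.inl i)) := by
    intro i j hij
    have := SimpleGraph.ConnectedComponent.eq.mp hij
    have := comp_index this
    simpa using this
  rw [numComp, hset, ← Set.image_univ, Set.ncard_image_of_injective _ hinj]
  simp [Set.ncard_univ]

end Aux

/-- For the even cycle `C_{2q}` with `q ≥ 2`, the recession
connectivity is `λ(C_{2q}) = q`. -/
theorem recConn_cycle (q : ℕ) [NeZero q] (hq : 2 ≤ q) :
    recConn (cycleEdges q) = q := by
  have hmem : q ∈ {m | ∃ S ⊆ cycleEdges q, RecStrong S (cycleEdges q) ∧ numComp S = m} :=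
    ⟨matchS q, matchS_subset, fun v w _ _ => reach_all v w, numComp_matchS⟩
  have hub : ∀ m ∈ {m | ∃ S ⊆ cycleEdges q, RecStrong S (cycleEdges q) ∧ numComp S = m},
      m ≤ q := by
    rintro m ⟨S, _, _, rfl⟩
    exact numComp_le S
  exact le_antisymm (csSup_le ⟨q, hmem⟩ hub) (le_csSup ⟨q, hub⟩ hmem)
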